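/- arXiv:2509.00302 — 4 statements merged into one kernel-verified Lean document; each statement's English description precedes it below -/
import Mathlib

section
/- Let q be a prime power and let r ≥ 1, δ ≥ 2 be integers. Let C be a linear code over F_q with parameters [n,k,d]_q that is an optimal (r,δ)-LRC and satisfies d/n ≤ 2/3. Then d ≤ ((r+δ−1)(r+1) + δ(δ−1))/r · q. -/
/-- The Hamming weight of a vector: the number of nonzero coordinates. -/
def hammingWt {F : Type*} [Zero F] [DecidableEq F] {n : ℕ} (v : Fin n → F) : ℕ :=
  (Finset.univ.filter (fun i => v i ≠ 0)).card

/-- The minimum distance of the linear code `C` is at least `d`. -/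
def MinDistGe {F : Type*} [Field F] [DecidableEq F] {n : ℕ}
    (C : Submodule F (Fin n → F)) (d : ℕ) : Prop :=
  ∀ c ∈ C, c ≠ 0 → d ≤ hammingWt c

/-- The minimum distance of the linear code `C` is exactly `d`. -/
def MinDistEq {F : Type*} [Field F] [DecidableEq F] {n : ℕ}
    (C : Submodule F (Fin n → F)) (d : ℕ) : Prop :=
  MinDistGe C d ∧ ∃ c ∈ C, c ≠ 0 ∧ hammingWt c = d

/-- `C` is an `(r, δ)`-locally repairable code: every coordinate `i` has a repair
group `R` containing `i`, of size at most `r + δ - 1`, such that the punctured code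
`C|_R` has minimum distance at least `δ` (i.e. every codeword whose restriction to
`R` is nonzero has at least `δ` nonzero coordinates inside `R`). -/
def IsLRC {F : Type*} [Field F] [DecidableEq F] {n : ℕ}
    (C : Submodule F (Fin n → F)) (r δ : ℕ) : Prop :=
  ∀ i : Fin n, ∃ R : Finset (Fin n), i ∈ R ∧ R.card ≤ r + δ - 1 ∧
    ∀ c ∈ C, (∃ j ∈ R, c j ≠ 0) → δ ≤ (R.filter (fun j => c j ≠ 0)).card

/-- The parameters `[n, k, d]` attain the Singleton-type bound for `(r, δ)`-LRCs:
`d = n - k + 1 - (⌈k/r⌉ - 1)(δ - 1)`  (here `⌈k/r⌉ = (k + r - 1)/r`). -/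
def SingletonOptimal (n k d r δ : ℕ) : Prop :=
  (d : ℤ) = (n : ℤ) - (k : ℤ) + 1 - ((((k + r - 1) / r : ℕ) : ℤ) - 1) * ((δ : ℤ) - 1)

/-- There exists an optimal `(r, δ)`-LRC over `F` with parameters `[n, k, d]`. -/
def ExistsOptimalLRC (F : Type*) [Field F] [DecidableEq F] (n k d r δ : ℕ) : Prop :=
  ∃ C : Submodule F (Fin n → F),
    Module.finrank F C = k ∧ MinDistEq C d ∧ IsLRC C r δ ∧ SingletonOptimal n k d r δ

section Aux
open Finset Module LinearMap

variable {F : Type*} [Field F] [DecidableEq F] {n : ℕ}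

/-- Projection onto coordinates in `V` (zeroing the others). -/
def prj (F : Type*) [Field F] [DecidableEq F] {n : ℕ} (V : Finset (Fin n)) :
    (Fin n → F) →ₗ[F] (Fin n → F) :=
  LinearMap.pi fun i => if i ∈ V then LinearMap.proj i else 0

lemma prj_apply (V : Finset (Fin n)) (c : Fin n → F) (i : Fin n) :
    prj F V c i = if i ∈ V then c i else 0 := by
  simp only [prj, LinearMap.pi_apply]
  split <;> simp

/-- The restriction of `C` to `V`, as a linear map from `C`. -/
def fC (C : Submodule F (Fin n → F)) (V : Finset (Fin n)) : ↥C →ₗ[F] (Fin n → F) :=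
  (prj F V).comp C.subtype

/-- The rank of the restriction of `C` to coordinates `V`. -/
noncomputable def rk (C : Submodule F (Fin n → F)) (V : Finset (Fin n)) : ℕ :=
  finrank F (LinearMap.range (fC C V))

lemma mem_ker_fC {C : Submodule F (Fin n → F)} {V : Finset (Fin n)} {c : ↥C} :
    c ∈ LinearMap.ker (fC C V) ↔ ∀ j ∈ V, (c : Fin n → F) j = 0 := by
  simp only [LinearMap.mem_ker, fC, LinearMap.comp_apply, Submodule.subtype_apply]
  constructor
  · intro h j hj
    have := congrFun h j
    rwa [prj_apply, if_pos hj] at this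
  · intro h
    funext j
    rw [prj_apply]
    split
    · exact h j ‹_›
    · rfl

lemma rk_add_ker (C : Submodule F (Fin n → F)) (V : Finset (Fin n)) :
    rk C V + finrank F (LinearMap.ker (fC C V)) = finrank F C := by
  rw [rk, Nat.add_comm, ← LinearMap.finrank_range_add_finrank_ker (fC C V), Nat.add_comm]

lemma rk_le_of_ker_le {C : Submodule F (Fin n → F)} {A B : Finset (Fin n)}
    (h : LinearMap.ker (fC C B) ≤ LinearMap.ker (fC C A)) : rk C A ≤ rk C B := by
  have h1 := rk_add_ker C A
  have h2 := rk_add_ker C B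
  have := Submodule.finrank_mono h
  omega

lemma rk_mono {C : Submodule F (Fin n → F)} {A B : Finset (Fin n)} (h : A ⊆ B) :
    rk C A ≤ rk C B := by
  apply rk_le_of_ker_le
  intro c hc
  rw [mem_ker_fC] at hc ⊢
  exact fun j hj => hc j (h hj)

lemma rk_empty (C : Submodule F (Fin n → F)) : rk C (∅ : Finset (Fin n)) = 0 := by
  have : LinearMap.range (fC C (∅ : Finset (Fin n))) = ⊥ := by
    rw [LinearMap.range_eq_bot]
    ext c j
    simp [fC, prj_apply]
  rw [rk, this, finrank_bot]

lemma mem_span_singles (X : Finset (Fin n)) (z : Fin n → F) (hz : ∀ j ∉ X, z j = 0) :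
    z ∈ Submodule.span F ((X.image fun i => Pi.single i (1 : F) : Finset (Fin n → F)) :
      Set (Fin n → F)) := by
  have hrep : z = ∑ j ∈ X, z j • (Pi.single j (1 : F) : Fin n → F) := by
    funext i
    rw [Finset.sum_apply]
    by_cases hi : i ∈ X
    · rw [Finset.sum_eq_single i]
      · simp
      · intro b _ hb
        simp [Pi.single_apply, hb]
      · intro h; exact absurd hi h
    · rw [hz i hi]
      symm
      apply Finset.sum_eq_zero
      intro b hb
      have : b ≠ i := fun h => hi (h ▸ hb)
      simp [Pi.single_apply, this]
  rw [hrep]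
  apply Submodule.sum_mem
  intro j hj
  exact Submodule.smul_mem _ _ (Submodule.subset_span (by simp; exact ⟨j, hj, rfl⟩))

lemma rk_union_le (C : Submodule F (Fin n → F)) (V X : Finset (Fin n)) :
    rk C (V ∪ X) ≤ rk C V + X.card := by
  have key : LinearMap.range (fC C (V ∪ X)) ≤
      LinearMap.range (fC C V) ⊔ Submodule.span F
        ((X.image fun i => Pi.single i (1 : F) : Finset (Fin n → F)) : Set (Fin n → F)) := by
    rintro y ⟨c, rfl⟩
    have : fC C (V ∪ X) c = fC C V c + (fC C (V ∪ X) c - fC C V c) := by ring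
    rw [this]
    apply Submodule.add_mem_sup (LinearMap.mem_range_self _ _)
    apply mem_span_singles
    intro j hj
    simp only [Pi.sub_apply, fC, LinearMap.comp_apply, Submodule.subtype_apply,
      prj_apply, Finset.mem_union]
    by_cases hv : j ∈ V
    · simp [hv]
    · simp [hv, hj]
  calc rk C (V ∪ X) ≤ finrank F ↥(LinearMap.range (fC C V) ⊔ Submodule.span F
        ((X.image fun i => Pi.single i (1 : F) : Finset (Fin n → F)) : Set (Fin n → F))) :=
        Submodule.finrank_mono key
    _ ≤ _ := by
        have h1 := Submodule.finrank_sup_add_finrank_inf_eq (LinearMap.range (fC C V))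
          (Submodule.span F ((X.image fun i => Pi.single i (1 : F) : Finset (Fin n → F)) :
            Set (Fin n → F)))
        have h2 := finrank_span_finset_le_card (R := F) (X.image fun i => Pi.single i (1 : F))
        have h3 := Finset.card_image_le (s := X) (f := fun i => Pi.single i (1 : F))
        unfold rk
        unfold Set.finrank at h2
        omega


/-- Adding a repair set `R` to `V` increases the restriction rank by at most
`|R \ V| - min(|R \ V|, δ-1)`. -/
lemma rk_union_repair {C : Submodule F (Fin n → F)} {V R : Finset (Fin n)} {δ : ℕ}
    (hδ : 2 ≤ δ)
    (hR : ∀ c ∈ C, (∃ j ∈ R, c j ≠ 0) → δ ≤ (R.filter (fun j => c j ≠ 0)).card) :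
    rk C (V ∪ R) + min (R \ V).card (δ - 1) ≤ rk C V + (R \ V).card := by
  set s := (R \ V).card with hs
  obtain ⟨Δ, hΔsub, hΔcard⟩ := Finset.exists_subset_card_eq
    (show min s (δ - 1) ≤ (R \ V).card from min_le_left _ _)
  -- step 1 : rk (V ∪ R) ≤ rk ((V ∪ R) \ Δ)
  have step1 : rk C (V ∪ R) ≤ rk C ((V ∪ R) \ Δ) := by
    apply rk_le_of_ker_le
    intro c hc
    rw [mem_ker_fC] at hc ⊢
    have hzero : ∀ j ∈ R, (c : Fin n → F) j = 0 := by
      by_contra hcon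
      push_neg at hcon
      obtain ⟨j0, hj0R, hj0⟩ := hcon
      have hge := hR (c : Fin n → F) c.2 ⟨j0, hj0R, hj0⟩
      have hsub : R.filter (fun j => (c : Fin n → F) j ≠ 0) ⊆ Δ := by
        intro j hj
        rw [Finset.mem_filter] at hj
        by_contra hjΔ
        exact hj.2 (hc j (by
          rw [Finset.mem_sdiff]
          exact ⟨Finset.mem_union_right _ hj.1, hjΔ⟩))
      have := Finset.card_le_card hsub
      rw [hΔcard] at this
      have : δ ≤ δ - 1 := le_trans hge (le_trans this (min_le_right _ _))
      omega
    intro j hj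
    rcases Finset.mem_union.mp hj with hjV | hjR
    · exact hc j (by
        rw [Finset.mem_sdiff]
        refine ⟨Finset.mem_union_left _ hjV, fun hjΔ => ?_⟩
        have := hΔsub hjΔ
        rw [Finset.mem_sdiff] at this
        exact this.2 hjV)
    · exact hzero j hjR
  -- step 2 : (V ∪ R) \ Δ ⊆ V ∪ ((R \ V) \ Δ)
  have step2 : rk C ((V ∪ R) \ Δ) ≤ rk C (V ∪ ((R \ V) \ Δ)) := by
    apply rk_mono
    intro j hj
    rw [Finset.mem_sdiff, Finset.mem_union] at hj
    rcases hj.1 with h | h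
    · exact Finset.mem_union_left _ h
    · by_cases hv : j ∈ V
      · exact Finset.mem_union_left _ hv
      · exact Finset.mem_union_right _ (by
          rw [Finset.mem_sdiff, Finset.mem_sdiff]
          exact ⟨⟨h, hv⟩, hj.2⟩)
  have step3 : rk C (V ∪ ((R \ V) \ Δ)) ≤ rk C V + ((R \ V) \ Δ).card :=
    rk_union_le C V _
  have hcard : ((R \ V) \ Δ).card = s - min s (δ - 1) := by
    rw [Finset.card_sdiff_of_subset hΔsub, hΔcard]
  have hmin : min s (δ - 1) ≤ s := min_le_left _ _
  omega

/-- Greedy accumulation of repair sets: we can find a union `V` of repair sets with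
rank savings at least `T` and controlled size. -/
lemma greedy {C : Submodule F (Fin n → F)} {r δ : ℕ} (hr : 1 ≤ r) (hδ : 2 ≤ δ)
    (hlrc : IsLRC C r δ) (T : ℕ)
    (hT : T * (r + (δ - 1)) ≤ (δ - 1) * n) :
    ∃ ℓ : ℕ, ∃ V : Finset (Fin n),
      rk C V + ℓ ≤ V.card ∧ (δ - 1) * V.card ≤ ℓ * (r + (δ - 1)) ∧ T ≤ ℓ ∧
        ℓ ≤ T + δ - 2 := by
  suffices h : ∀ j : ℕ, ∃ ℓ : ℕ, ∃ V : Finset (Fin n),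
      (rk C V + ℓ ≤ V.card ∧ (δ - 1) * V.card ≤ ℓ * (r + (δ - 1))) ∧
      ((T ≤ ℓ ∧ ℓ ≤ T + δ - 2) ∨ (j ≤ ℓ ∧ ℓ < T)) by
    obtain ⟨ℓ, V, hcert, hbr⟩ := h T
    rcases hbr with ⟨h1, h2⟩ | ⟨h1, h2⟩
    · exact ⟨ℓ, V, hcert.1, hcert.2, h1, h2⟩
    · omega
  intro j
  induction j with
  | zero =>
    refine ⟨0, ∅, ⟨by simp [rk_empty], by simp⟩, ?_⟩
    by_cases hT0 : T = 0
    · left; omega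
    · right; omega
  | succ j ih =>
    obtain ⟨ℓ, V, ⟨hcert1, hcert2⟩, hbr⟩ := ih
    rcases hbr with h | ⟨h1, h2⟩
    · exact ⟨ℓ, V, ⟨hcert1, hcert2⟩, Or.inl h⟩
    -- ℓ < T : V is not everything
    have hVn : V ≠ Finset.univ := by
      intro hVu
      have hc : V.card = n := by rw [hVu]; simp
      have : (δ - 1) * n ≤ ℓ * (r + (δ - 1)) := by rw [← hc]; exact hcert2
      have : T * (r + (δ - 1)) ≤ ℓ * (r + (δ - 1)) := le_trans hT this
      have : T ≤ ℓ := Nat.le_of_mul_le_mul_right this (by omega)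
      omega
    obtain ⟨i, hi⟩ : ∃ i : Fin n, i ∉ V := by
      by_contra hcon
      push_neg at hcon
      exact hVn (Finset.eq_univ_iff_forall.mpr hcon)
    obtain ⟨R, hiR, hRcard, hRprop⟩ := hlrc i
    set s := (R \ V).card with hs
    have hs1 : 1 ≤ s := Finset.card_pos.mpr ⟨i, by rw [Finset.mem_sdiff]; exact ⟨hiR, hi⟩⟩
    have hsle : s ≤ r + (δ - 1) := by
      have h1 : (R \ V).card ≤ R.card := Finset.card_le_card (Finset.sdiff_subset)
      omega
    set inc := min s (δ - 1) with hinc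
    have hinc1 : 1 ≤ inc := by
      rw [hinc]; exact le_min hs1 (by omega)
    refine ⟨ℓ + inc, V ∪ R, ⟨?_, ?_⟩, ?_⟩
    · have hA := rk_union_repair (V := V) hδ hRprop
      have hcardU : (V ∪ R).card = V.card + s := by
        rw [Finset.union_comm, ← Finset.card_sdiff_add_card]
        · omega
      omega
    · have hcardU : (V ∪ R).card ≤ V.card + s := by
        have := Finset.card_union_le V R
        have h2 : (V ∪ R).card = V.card + s := by
          rw [Finset.union_comm, ← Finset.card_sdiff_add_card]; omega
        omega
      have key : (δ - 1) * s ≤ inc * (r + (δ - 1)) := by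
        rcases le_or_gt s (δ - 1) with h | h
        · have : inc = s := by rw [hinc]; exact min_eq_left h
          rw [this]
          calc (δ - 1) * s ≤ (r + (δ - 1)) * s := by
                apply Nat.mul_le_mul_right; omega
            _ = s * (r + (δ - 1)) := Nat.mul_comm _ _
        · have : inc = δ - 1 := by rw [hinc]; exact min_eq_right (by omega)
          rw [this]
          exact Nat.mul_le_mul_left _ hsle
      calc (δ - 1) * (V ∪ R).card ≤ (δ - 1) * (V.card + s) := Nat.mul_le_mul_left _ hcardU
        _ = (δ - 1) * V.card + (δ - 1) * s := Nat.mul_add _ _ _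
        _ ≤ ℓ * (r + (δ - 1)) + inc * (r + (δ - 1)) := Nat.add_le_add hcert2 key
        _ = (ℓ + inc) * (r + (δ - 1)) := (Nat.add_mul _ _ _).symm
    · by_cases hfin : T ≤ ℓ + inc
      · left
        constructor
        · exact hfin
        · have : inc ≤ δ - 1 := min_le_right _ _
          omega
      · right; omega

end Aux

open Finset

lemma plotkin2 {F : Type*} [Field F] [Fintype F] [DecidableEq F] {n : ℕ}
    {C : Submodule F (Fin n → F)} {d : ℕ} (hd : MinDistGe C d)
    (u w : Fin n → F) (hu : u ∈ C) (hw : w ∈ C)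
    (hind : ∀ a b : F, ¬(a = 0 ∧ b = 0) → a • u + b • w ≠ 0)
    (W : Finset (Fin n)) (hsupp : ∀ i ∉ W, u i = 0 ∧ w i = 0) :
    d * (Fintype.card F ^ 2 - 1) ≤ W.card * (Fintype.card F ^ 2 - Fintype.card F) := by
  classical
  set q := Fintype.card F with hq
  have hq1 : 1 ≤ q := Fintype.card_pos
  have hcardprod : Fintype.card (F × F) = q ^ 2 := by
    rw [Fintype.card_prod, sq]
  -- total weight sum
  have hswap : ∑ p : F × F, hammingWt (p.1 • u + p.2 • w)
      = ∑ i : Fin n, ((univ : Finset (F × F)).filter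
          (fun p => (p.1 • u + p.2 • w) i ≠ 0)).card := by
    simp only [hammingWt, Finset.card_filter]
    exact Finset.sum_comm
  -- lower bound
  have hlow : d * (q ^ 2 - 1) ≤ ∑ p : F × F, hammingWt (p.1 • u + p.2 • w) := by
    have hsub : ((univ : Finset (F × F)).erase (0, 0)) ⊆ univ := Finset.erase_subset _ _
    have hcard : ((univ : Finset (F × F)).erase (0, 0)).card = q ^ 2 - 1 := by
      rw [Finset.card_erase_of_mem (Finset.mem_univ _), Finset.card_univ, hcardprod]
    calc d * (q ^ 2 - 1) = ∑ _p ∈ (univ : Finset (F × F)).erase (0, 0), d := by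
          rw [Finset.sum_const, hcard, smul_eq_mul, Nat.mul_comm]
      _ ≤ ∑ p ∈ (univ : Finset (F × F)).erase (0, 0), hammingWt (p.1 • u + p.2 • w) := by
          apply Finset.sum_le_sum
          intro p hp
          have hpne : ¬(p.1 = 0 ∧ p.2 = 0) := by
            intro ⟨h1, h2⟩
            apply Finset.ne_of_mem_erase hp
            ext <;> simp [h1, h2]
          exact hd _ (C.add_mem (C.smul_mem _ hu) (C.smul_mem _ hw)) (hind _ _ hpne)
      _ ≤ _ := Finset.sum_le_sum_of_subset hsub
  -- upper bound per coordinate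
  have hup : ∀ i : Fin n, ((univ : Finset (F × F)).filter
      (fun p => (p.1 • u + p.2 • w) i ≠ 0)).card ≤ if i ∈ W then q ^ 2 - q else 0 := by
    intro i
    have happ : ∀ p : F × F, (p.1 • u + p.2 • w) i = p.1 * u i + p.2 * w i := by
      intro p; simp
    by_cases hiW : i ∈ W
    · rw [if_pos hiW]
      have hsplit := Finset.card_filter_add_card_filter_not
        (s := (univ : Finset (F × F))) (p := fun p => (p.1 • u + p.2 • w) i ≠ 0)
      rw [Finset.card_univ, hcardprod] at hsplit
      have hZ : q ≤ ((univ : Finset (F × F)).filter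
          (fun p => ¬((p.1 • u + p.2 • w) i ≠ 0))).card := by
        by_cases hui : u i = 0
        · by_cases hwi : w i = 0
          · have : ((univ : Finset (F × F)).filter
                (fun p => ¬((p.1 • u + p.2 • w) i ≠ 0))) = univ := by
              apply Finset.filter_true_of_mem
              intro p _
              rw [not_not, happ, hui, hwi]; ring
            rw [this, Finset.card_univ, hcardprod]
            nlinarith
          · -- w i ≠ 0 : map a ↦ (a, 0)
            have hinj : Set.InjOn (fun a : F => ((a, 0) : F × F)) ↑(univ : Finset F) := by
              intro a _ b _ hab
              exact congrArg Prod.fst hab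
            calc q = (univ : Finset F).card := (Finset.card_univ).symm
              _ ≤ _ := Finset.card_le_card_of_injOn _ (by
                  intro a _
                  simp only [Finset.mem_coe, Finset.mem_filter, Finset.mem_univ, true_and, not_not, happ]
                  rw [hui]; ring) hinj
        · -- u i ≠ 0 : map b ↦ (-(w i * (u i)⁻¹) * b, b)
          have hinj : Set.InjOn (fun b : F => ((-(w i * (u i)⁻¹) * b, b) : F × F))
              ↑(univ : Finset F) := by
            intro a _ b _ hab
            exact congrArg Prod.snd hab
          calc q = (univ : Finset F).card := (Finset.card_univ).symm
            _ ≤ _ := Finset.card_le_card_of_injOn _ (by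
                intro b _
                simp only [Finset.mem_coe, Finset.mem_filter, Finset.mem_univ, true_and, not_not, happ]
                field_simp
                ring) hinj
      omega
    · rw [if_neg hiW]
      have : ((univ : Finset (F × F)).filter (fun p => (p.1 • u + p.2 • w) i ≠ 0)) = ∅ := by
        apply Finset.filter_false_of_mem
        intro p _
        rw [not_not, happ, (hsupp i hiW).1, (hsupp i hiW).2]; ring
      rw [this]
      simp
  have hupper : ∑ i : Fin n, ((univ : Finset (F × F)).filter
      (fun p => (p.1 • u + p.2 • w) i ≠ 0)).card ≤ W.card * (q ^ 2 - q) := by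
    calc ∑ i : Fin n, ((univ : Finset (F × F)).filter
          (fun p => (p.1 • u + p.2 • w) i ≠ 0)).card
        ≤ ∑ i : Fin n, (if i ∈ W then q ^ 2 - q else 0) := Finset.sum_le_sum (fun i _ => hup i)
      _ = W.card * (q ^ 2 - q) := by
          rw [Finset.sum_ite_mem, Finset.univ_inter, Finset.sum_const, smul_eq_mul]
  omega

lemma ceil_div_ge (a r : ℕ) (hr : 1 ≤ r) : a ≤ r * ((a + r - 1) / r) := by
  have e : a + r - 1 = a + (r - 1) := by omega
  rw [e]
  have h := Nat.div_add_mod (a + (r - 1)) r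
  have h2 : (a + (r - 1)) % r < r := Nat.mod_lt _ (by omega)
  have h4 : r - 1 + 1 = r := by omega
  linarith


lemma arith1 (d q E : ℤ) (hq : 2 ≤ q) (hE : 0 ≤ E) (hd : 0 ≤ d)
    (h : d * (q ^ 2 - 1) ≤ (d + 1 + E) * (q ^ 2 - q)) : d ≤ (1 + E) * q := by
  nlinarith

lemma arith2 (r δ x : ℚ) (hr : 1 ≤ r) (hδ : 2 ≤ δ)
    (hx : x * r ≤ (δ - 1) * (δ - 1) + r - 1) :
    (1 + (δ - 2 + x)) * r ≤ (r + δ - 1) * (r + 1) + δ * (δ - 1) := by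
  nlinarith


set_option maxHeartbeats 1000000 in
/-- If `C` is an optimal `(r, δ)`-LRC over `F_q` with parameters
`[n, k, d]_q` (where `r ≥ 1`, `δ ≥ 2`) and `d/n ≤ 2/3`, then
`d ≤ ((r+δ-1)(r+1) + δ(δ-1))/r · q`. -/
theorem stmt_0 (q : ℕ) (F : Type*) [Field F] [Fintype F] [DecidableEq F]
    (hF : Fintype.card F = q)
    (n k d r δ : ℕ) (hr : 1 ≤ r) (hδ : 2 ≤ δ)
    (C : Submodule F (Fin n → F))
    (hk : Module.finrank F C = k)
    (hd : MinDistEq C d)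
    (hlrc : IsLRC C r δ)
    (hopt : SingletonOptimal n k d r δ)
    (hdn : (d : ℚ) / (n : ℚ) ≤ 2 / 3) :
    (d : ℚ) ≤ (((r : ℚ) + (δ : ℚ) - 1) * ((r : ℚ) + 1) + (δ : ℚ) * ((δ : ℚ) - 1)) / (r : ℚ)
      * (q : ℚ) := by
  classical
  obtain ⟨hge, c₀, hc₀C, hc₀ne, hc₀wt⟩ := hd
  -- basic facts
  have hq2 : 2 ≤ q := by rw [← hF]; exact Fintype.one_lt_card
  have hk1 : 1 ≤ k := by
    rw [← hk]
    have : Nontrivial ↥C := ⟨⟨⟨c₀, hc₀C⟩, 0, by simp [hc₀ne]⟩⟩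
    exact Module.finrank_pos
  have hd1 : 1 ≤ d := by
    rw [← hc₀wt]
    have : ∃ i, c₀ i ≠ 0 := by
      by_contra hcon
      push_neg at hcon
      exact hc₀ne (funext hcon)
    obtain ⟨i, hi⟩ := this
    exact Finset.card_pos.mpr ⟨i, by simp [hammingWt, hi]⟩
  have hdn' : d ≤ n := by
    rw [← hc₀wt]
    exact le_trans (Finset.card_le_card (Finset.filter_subset _ _)) (by simp)
  have h3d : 3 * d ≤ 2 * n := by
    have hn0 : (0 : ℚ) < (n : ℚ) := by
      have : 1 ≤ n := le_trans hd1 hdn'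
      exact_mod_cast this
    rw [div_le_div_iff₀ hn0 (by norm_num)] at hdn
    exact_mod_cast (by linarith : (3 : ℚ) * d ≤ 2 * n)
  -- numerical quantities
  set xx := ((δ - 1) * (δ - 1) + r - 1) / r with hxx_def
  have hxr : (δ - 1) * (δ - 1) ≤ r * xx := by
    rw [hxx_def]
    exact ceil_div_ge _ _ hr
  have hxr' : xx * r ≤ (δ - 1) * (δ - 1) + r - 1 := Nat.div_mul_le_self _ _
  set E := δ - 2 + xx with hE_def
  set m := (k + r - 1) / r with hm_def
  have hm1 : 1 ≤ m := by
    rw [hm_def]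
    rw [Nat.le_div_iff_mul_le (by omega)]
    omega
  have hkm : r * (m - 1) + 1 ≤ k := by
    have h1 : m * r ≤ k + r - 1 := by rw [hm_def]; exact Nat.div_mul_le_self _ _
    have h2 : m * r = (m - 1) * r + r := by
      conv_lhs => rw [show m = (m - 1) + 1 by omega]
      rw [Nat.add_mul, Nat.one_mul]
    have h3 : (m - 1) * r = r * (m - 1) := Nat.mul_comm _ _
    omega
  set A := m - 1 with hA_def
  -- optimality as a ℕ-linear fact with atom A * (δ - 1)
  have hoptN : d + k + A * (δ - 1) = n + 1 := by
    unfold SingletonOptimal at hopt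
    rw [← hm_def] at hopt
    have hc1 : ((m : ℤ) - 1) = ((A : ℕ) : ℤ) := by
      rw [hA_def]; push_cast; omega
    have hc2 : ((δ : ℤ) - 1) = (((δ - 1 : ℕ)) : ℤ) := by push_cast; omega
    rw [hc1, hc2, ← Nat.cast_mul] at hopt
    omega
  -- main combinatorial bound : d ≤ (1 + E) * q
  have main : d ≤ (1 + E) * q := by
    by_cases hdsmall : d ≤ 2 * E + 2
    · calc d ≤ 2 * (1 + E) := by omega
        _ ≤ q * (1 + E) := Nat.mul_le_mul_right _ hq2
        _ = (1 + E) * q := Nat.mul_comm _ _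
    -- main branch : d ≥ 2E + 3
    push_neg at hdsmall
    have hnd : d + E + 2 ≤ n := by omega
    set c0n := n - d - 1 - E with hc0n_def
    have hc0n1 : 1 ≤ c0n := by omega
    -- the key size fact : A * (r + (δ-1)) + d ≤ n
    have hP1 : A * (r + (δ - 1)) + d ≤ n := by
      have e1 : A * (r + (δ - 1)) = A * r + A * (δ - 1) := Nat.mul_add _ _ _
      have e2 : A * r = r * A := Nat.mul_comm _ _
      omega
    -- obtain the greedy union of repair sets
    set T := A * (δ - 1) - E with hT_def
    have hgr : ∃ ℓ : ℕ, ∃ V : Finset (Fin n),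
        rk C V + ℓ ≤ V.card ∧ (δ - 1) * V.card ≤ ℓ * (r + (δ - 1)) ∧ T ≤ ℓ ∧
        ℓ ≤ T + δ - 2 ∧ V.card ≤ c0n := by
      by_cases hT0 : T = 0
      · refine ⟨0, ∅, by simp [rk_empty], by simp, by omega, by omega, by simp⟩
      · have hTbound : T * (r + (δ - 1)) ≤ (δ - 1) * n := by
          calc T * (r + (δ - 1)) ≤ (A * (δ - 1)) * (r + (δ - 1)) :=
              Nat.mul_le_mul_right _ (by omega)
            _ = (δ - 1) * (A * (r + (δ - 1))) := by ring
            _ ≤ (δ - 1) * n := Nat.mul_le_mul_left _ (by omega)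
        obtain ⟨ℓ, V, hcert1, hcert2, hT1, hT2⟩ := greedy hr hδ hlrc T hTbound
        refine ⟨ℓ, V, hcert1, hcert2, hT1, hT2, ?_⟩
        -- size chain
        have hET : A * (δ - 1) = E + T := by omega
        have h1 : (δ - 1) * V.card ≤ (T + δ - 2) * (r + (δ - 1)) :=
          le_trans hcert2 (Nat.mul_le_mul_right _ hT2)
        have h2 : (T + δ - 2) * (r + (δ - 1)) + (δ - 1) * (1 + E) ≤ (E + T) * (r + (δ - 1)) := by
          have e1 : E + T = (T + δ - 2) + xx := by omega
          rw [e1, Nat.add_mul]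
          have e2 : (δ - 1) * (1 + E) = (δ - 1) * (δ - 1) + (δ - 1) * xx := by
            rw [show 1 + E = (δ - 1) + xx by omega, Nat.mul_add]
          have e3 : (δ - 1) * (δ - 1) + (δ - 1) * xx ≤ r * xx + (δ - 1) * xx :=
            Nat.add_le_add_right hxr _
          have e4 : r * xx + (δ - 1) * xx = xx * (r + (δ - 1)) := by ring
          omega
        have h3 : (E + T) * (r + (δ - 1)) = (δ - 1) * (A * (r + (δ - 1))) := by
          rw [← hET]; ring
        have h4 : (δ - 1) * (A * (r + (δ - 1))) ≤ (δ - 1) * (c0n + 1 + E) :=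
          Nat.mul_le_mul_left _ (by omega)
        have h5 : (δ - 1) * (c0n + 1 + E) = (δ - 1) * c0n + (δ - 1) * (1 + E) := by ring
        have h6 : (δ - 1) * V.card ≤ (δ - 1) * c0n := by omega
        exact Nat.le_of_mul_le_mul_left h6 (by omega)
    obtain ⟨ℓ, V, hcert1, hcert2, hTℓ, hℓT, hVc0⟩ := hgr
    -- choose the shortening support Wc ⊇ V with |Wc| = c0n
    obtain ⟨Wc, hVWc, _, hWccard⟩ := Finset.exists_subsuperset_card_eq
      (Finset.subset_univ V) hVc0 (by simp; omega)
    -- rank bound for Wc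
    have hrkWc : rk C Wc + ℓ ≤ c0n := by
      have hU : V ∪ (Wc \ V) = Wc := Finset.union_sdiff_of_subset hVWc
      have h1 : rk C Wc ≤ rk C V + (Wc \ V).card := by
        have h0 := rk_union_le C V (Wc \ V)
        rwa [hU] at h0
      have h2 : (Wc \ V).card = c0n - V.card := by
        rw [Finset.card_sdiff_of_subset hVWc, hWccard]
      omega
    -- kernel has dimension ≥ 2
    have hker2 : 2 ≤ Module.finrank F (LinearMap.ker (fC C Wc)) := by
      have h1 := rk_add_ker C Wc
      rw [hk] at h1
      -- k + ℓ ≥ c0n + 2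
      have h2 : c0n + 2 ≤ k + ℓ := by
        have : T + E ≥ A * (δ - 1) := by omega
        omega
      omega
    -- extract two independent codewords supported on W = univ \ Wc
    set K := LinearMap.ker (fC C Wc) with hK_def
    obtain ⟨x, hxK, hx0⟩ := Submodule.exists_mem_ne_zero_of_ne_bot (by
      intro hbot
      rw [hbot, finrank_bot] at hker2
      omega : K ≠ ⊥)
    obtain ⟨y, hyK, hy⟩ : ∃ y ∈ K, y ∉ Submodule.span F {x} := by
      by_contra hcon
      push_neg at hcon
      have hle : K ≤ Submodule.span F {x} := hcon
      have := Submodule.finrank_mono hle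
      rw [finrank_span_singleton hx0] at this
      omega
    set u := ((x : Fin n → F)) with hu_def
    set w := ((y : Fin n → F)) with hw_def
    have hxker : ∀ j ∈ Wc, u j = 0 := mem_ker_fC.mp hxK
    have hyker : ∀ j ∈ Wc, w j = 0 := mem_ker_fC.mp hyK
    have huC : u ∈ C := x.2
    have hwC : w ∈ C := y.2
    -- independence
    have hind : ∀ a b : F, ¬(a = 0 ∧ b = 0) → a • u + b • w ≠ 0 := by
      intro a b hab h0
      have hxy : a • x + b • y = (0 : ↥C) := by
        apply Subtype.val_injective
        simpa [hu_def, hw_def] using h0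
      by_cases hb : b = 0
      · rw [hb] at hxy
        simp only [zero_smul, add_zero] at hxy
        rcases smul_eq_zero.mp hxy with ha | hx
        · exact hab ⟨ha, hb⟩
        · exact hx0 hx
      · apply hy
        rw [Submodule.mem_span_singleton]
        refine ⟨-(b⁻¹ * a), ?_⟩
        have h2 : b • y = -(a • x) := by
          rw [add_comm] at hxy
          rwa [add_eq_zero_iff_eq_neg] at hxy
        calc (-(b⁻¹ * a)) • x = b⁻¹ • (-(a • x)) := by
              rw [smul_neg, smul_smul]
              exact neg_smul (b⁻¹ * a) x
          _ = b⁻¹ • (b • y) := by rw [h2]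
          _ = y := inv_smul_smul₀ hb y
    -- apply the Plotkin bound
    set W := (Finset.univ : Finset (Fin n)) \ Wc with hW_def
    have hWcard : W.card = d + 1 + E := by
      rw [hW_def, Finset.card_sdiff_of_subset (Finset.subset_univ _), hWccard, Finset.card_univ,
        Fintype.card_fin]
      omega
    have hsupp : ∀ i ∉ W, u i = 0 ∧ w i = 0 := by
      intro i hi
      have : i ∈ Wc := by
        by_contra hcon
        exact hi (by rw [hW_def]; simp [hcon])
      exact ⟨hxker i this, hyker i this⟩
    have hplot := plotkin2 hge u w huC hwC hind W hsupp
    rw [hF, hWcard] at hplot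
    -- derive d ≤ (1 + E) * q
    have hq2' : (2 : ℤ) ≤ (q : ℤ) := by exact_mod_cast hq2
    have hplotZ : (d : ℤ) * ((q:ℤ) ^ 2 - 1) ≤ ((d:ℤ) + 1 + E) * ((q:ℤ) ^ 2 - q) := by
      have hq21 : 1 ≤ q ^ 2 := by
        have : 1 * 1 ≤ q * q := Nat.mul_le_mul (by omega) (by omega)
        rw [sq]; omega
      have hq2q : q ≤ q ^ 2 := by
        have : q * 1 ≤ q * q := Nat.mul_le_mul_left _ (by omega)
        rw [sq]; omega
      have e1 : ((q ^ 2 - 1 : ℕ) : ℤ) = (q:ℤ) ^ 2 - 1 := by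
        push_cast [Nat.cast_sub hq21]; ring
      have e2 : ((q ^ 2 - q : ℕ) : ℤ) = (q:ℤ) ^ 2 - q := by
        push_cast [Nat.cast_sub hq2q]; ring
      calc (d : ℤ) * ((q:ℤ) ^ 2 - 1) = ((d * (q ^ 2 - 1) : ℕ) : ℤ) := by
            push_cast [e1]; ring
        _ ≤ (((d + 1 + E) * (q ^ 2 - q) : ℕ) : ℤ) := by exact_mod_cast hplot
        _ = ((d:ℤ) + 1 + E) * ((q:ℤ) ^ 2 - q) := by push_cast [e2]; ring
    have hfin : (d : ℤ) ≤ (1 + (E:ℤ)) * q :=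
      arith1 _ _ _ hq2' (by positivity) (by positivity) hplotZ
    have hfin2 : (d : ℤ) ≤ (((1 + E) * q : ℕ) : ℤ) := by push_cast; exact hfin
    exact_mod_cast hfin2
  -- conclude the rational inequality
  have hrQ : (0 : ℚ) < (r : ℚ) := by exact_mod_cast hr
  have hδQ : (2 : ℚ) ≤ (δ : ℚ) := by exact_mod_cast hδ
  have hrQ1 : (1 : ℚ) ≤ (r : ℚ) := by exact_mod_cast hr
  have hxQ : (xx : ℚ) * r ≤ ((δ:ℚ) - 1) * ((δ:ℚ) - 1) + r - 1 := by
    have h1 : ((xx * r : ℕ) : ℚ) ≤ (((δ - 1) * (δ - 1) + r - 1 : ℕ) : ℚ) := by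
      exact_mod_cast hxr'
    have e1 : (((δ - 1) * (δ - 1) + r - 1 : ℕ) : ℚ) = ((δ:ℚ) - 1) * ((δ:ℚ) - 1) + r - 1 := by
      have : ((δ - 1 : ℕ) : ℚ) = (δ:ℚ) - 1 := by
        push_cast [Nat.cast_sub (by omega : 1 ≤ δ)]; ring
      rw [Nat.cast_sub (le_trans hr (Nat.le_add_left _ _)),
        Nat.cast_add, Nat.cast_mul, this]
      push_cast
      ring
    calc (xx : ℚ) * r = ((xx * r : ℕ) : ℚ) := by push_cast; ring
      _ ≤ _ := h1.trans_eq e1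
  have hEQ : ((E : ℚ)) = (δ:ℚ) - 2 + xx := by
    rw [hE_def]
    push_cast [Nat.cast_sub hδ]
    ring
  have hcoef : (1 : ℚ) + E ≤ (((r : ℚ) + (δ : ℚ) - 1) * ((r : ℚ) + 1) + (δ : ℚ) * ((δ : ℚ) - 1))
      / (r : ℚ) := by
    rw [le_div_iff₀ hrQ, hEQ]
    exact arith2 _ _ _ hrQ1 hδQ hxQ
  calc (d : ℚ) ≤ (((1 + E) * q : ℕ) : ℚ) := by exact_mod_cast main
    _ = ((1 : ℚ) + E) * q := by push_cast; ring
    _ ≤ _ := by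
        apply mul_le_mul_of_nonneg_right hcoef
        positivity
end

section
/- Let Q be a prime power, s ≥ 2 an integer, q = Q^{s}, let b be a positive divisor of (Q^{s}−1)/(Q−1), and let c be a positive divisor of s. Set M = (Q^{s}−1)/(b(Q−1)). Then the number of pairs (α, β) ∈ F_q × F_q satisfying β^{M} = Tr_{F_q/F_{Q^c}}(α) equals gcd(b, (Q^{c}−1)/(Q−1)) · q(q−1)/(bQ^{c}) + q/Q^{c}. -/
open Finset Polynomial

lemma count_pow_eq_one (F : Type*) [Field F] [Fintype F] [DecidableEq F] (n : ℕ) (hn : 0 < n) :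
    (Finset.univ.filter fun x : F => x ^ n = 1).card = Nat.gcd n (Fintype.card F - 1) := by
  classical
  set d := Nat.gcd n (Fintype.card F - 1) with hd
  have hcard1 : 0 < Fintype.card F - 1 := by
    have := Fintype.one_lt_card (α := F)
    omega
  have hd0 : 0 < d := Nat.gcd_pos_of_pos_left _ hn
  have hddvd : d ∣ Fintype.card F - 1 := Nat.gcd_dvd_right _ _
  -- the filter is the same as for exponent d
  have hset : (Finset.univ.filter fun x : F => x ^ n = 1)
      = (Finset.univ.filter fun x : F => x ^ d = 1) := by
    ext x
    simp only [mem_filter, mem_univ, true_and]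
    constructor
    · intro hx
      have hx0 : x ≠ 0 := by
        rintro rfl
        rw [zero_pow hn.ne'] at hx
        exact zero_ne_one hx
      have h1 : orderOf x ∣ n := orderOf_dvd_of_pow_eq_one hx
      have h2 : orderOf x ∣ Fintype.card F - 1 :=
        orderOf_dvd_of_pow_eq_one (FiniteField.pow_card_sub_one_eq_one x hx0)
      exact orderOf_dvd_iff_pow_eq_one.mp (Nat.dvd_gcd h1 h2)
    · intro hx
      obtain ⟨kk, hkk⟩ := Nat.gcd_dvd_left n (Fintype.card F - 1)
      rw [hkk, pow_mul, ← hd, hx, one_pow]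
  rw [hset]
  -- find a primitive d-th root of unity
  obtain ⟨g, hg⟩ := IsCyclic.exists_generator (α := Fˣ)
  have hordg : orderOf g = Fintype.card F - 1 := by
    rw [orderOf_eq_card_of_forall_mem_zpowers hg, Nat.card_eq_fintype_card,
      Fintype.card_units]
  have hζord : orderOf (g ^ ((Fintype.card F - 1) / d)) = d := by
    rw [orderOf_pow, hordg, Nat.gcd_eq_right (Nat.div_dvd_of_dvd hddvd),
      Nat.div_div_self hddvd hcard1.ne']
  have hprim : IsPrimitiveRoot ((g ^ ((Fintype.card F - 1) / d) : Fˣ) : F) d := by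
    rw [IsPrimitiveRoot.coe_units_iff]
    have := IsPrimitiveRoot.orderOf (g ^ ((Fintype.card F - 1) / d))
    rwa [hζord] at this
  have hset2 : (Finset.univ.filter fun x : F => x ^ d = 1)
      = (Polynomial.nthRoots d (1 : F)).toFinset := by
    ext x
    simp [Polynomial.mem_nthRoots hd0]
  rw [hset2, Multiset.toFinset_card_of_nodup (hprim.nthRoots_one_nodup),
    hprim.card_nthRoots_one]

/-- Let `q = Q^s` (`Q` a prime power, `s ≥ 2`), `b` a positive
divisor of `(Q^s-1)/(Q-1)`, `c` a positive divisor of `s`, and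
`M = (Q^s-1)/(b(Q-1))`. The number of pairs `(α, β) ∈ F_q × F_q` with
`β^M = Tr_{F_q/F_{Q^c}}(α) = ∑_{i=0}^{s/c-1} α^(Q^(ci))` equals
`gcd(b, (Q^c-1)/(Q-1)) · q(q-1)/(bQ^c) + q/Q^c`. -/
theorem stmt_15 (Q : ℕ) (hQ : IsPrimePow Q) (s : ℕ) (hs : 2 ≤ s)
    (b : ℕ) (hb : 0 < b) (hbdvd : b ∣ (Q ^ s - 1) / (Q - 1))
    (c : ℕ) (hc : 0 < c) (hcdvd : c ∣ s)
    (q : ℕ) (hq : q = Q ^ s)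
    (F : Type*) [Field F] [Fintype F] (hF : Fintype.card F = q) :
    (Set.ncard {p : F × F |
        p.2 ^ ((Q ^ s - 1) / (b * (Q - 1))) =
          ∑ i ∈ Finset.range (s / c), p.1 ^ (Q ^ (c * i))} : ℚ) =
      (Nat.gcd b ((Q ^ c - 1) / (Q - 1)) : ℚ) * ((q : ℚ) * ((q : ℚ) - 1))
          / ((b : ℚ) * (Q : ℚ) ^ c)
        + (q : ℚ) / (Q : ℚ) ^ c := by
  classical
  obtain ⟨p, k, hpp, hk, hQpk⟩ := hQ
  have hp : p.Prime := hpp.nat_prime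
  have hQ2 : 2 ≤ Q := by
    have h1 : 2 ^ 1 ≤ p ^ k := Nat.pow_le_pow_left hp.two_le 1 |>.trans
      (Nat.pow_le_pow_right hp.pos hk)
    simpa [hQpk] using h1
  -- characteristic of F is p
  have hcardF : Fintype.card F = p ^ (k * s) := by
    rw [hF, hq, ← hQpk, ← pow_mul]
  have hcharF : CharP F p := by
    obtain ⟨p', hp'⟩ := CharP.exists F
    obtain ⟨n, hpn, hcard⟩ := FiniteField.card F p'
    have hpp' : p' = p := by
      have h1 : p' ∣ p ^ (k * s) := by
        rw [← hcardF, hcard]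
        exact dvd_pow_self p' n.pos.ne'
      have h2 : p' ∣ p := hpn.dvd_of_dvd_pow h1
      exact (Nat.prime_dvd_prime_iff_eq hpn hp).mp h2
    rwa [hpp'] at hp'
  haveI := Fact.mk hp
  haveI : ExpChar F p := ExpChar.prime hp
  -- basic numerology
  have hs0 : 0 < s := by omega
  set m := s / c with hm
  set r := Q ^ c with hr
  have hrm : r ^ m = q := by
    rw [hr, hq, ← pow_mul, Nat.mul_div_cancel' hcdvd]
  have hr2 : 2 ≤ r := by
    calc 2 = 2 ^ 1 := rfl
    _ ≤ Q ^ c := Nat.pow_le_pow_left hQ2 1 |>.trans (Nat.pow_le_pow_right (by omega) hc)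
  have hm1 : 1 ≤ m := Nat.one_le_div_iff hc |>.mpr (Nat.le_of_dvd hs0 hcdvd)
  have hrp : r = p ^ (k * c) := by rw [hr, ← hQpk, ← pow_mul]
  set T : F → F := fun α => ∑ i ∈ Finset.range m, α ^ r ^ i with hT
  have hTsub : ∀ x y : F, T (x - y) = T x - T y := by
    intro x y
    rw [hT]
    simp only
    rw [← Finset.sum_sub_distrib]
    refine Finset.sum_congr rfl fun i _ => ?_
    have h1 : r ^ i = p ^ (k * c * i) := by rw [hrp, ← pow_mul]
    rw [h1]
    exact sub_pow_char_pow x y _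
  have hTadd : ∀ x y : F, T (x + y) = T x + T y := by
    intro x y
    rw [hT]
    simp only
    rw [← Finset.sum_add_distrib]
    refine Finset.sum_congr rfl fun i _ => ?_
    have h1 : r ^ i = p ^ (k * c * i) := by rw [hrp, ← pow_mul]
    rw [h1]
    exact add_pow_char_pow x y p _
  have hTzero : T 0 = 0 := by
    rw [hT]
    simp only
    refine Finset.sum_eq_zero fun i _ => ?_
    exact zero_pow (pow_ne_zero _ (by omega))
  have hTmem : ∀ α : F, (T α) ^ r = T α := by
    intro α
    have h0 : (T α) ^ r = ∑ i ∈ Finset.range m, α ^ r ^ (i + 1) := by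
      rw [hT]
      simp only
      rw [hrp, sum_pow_char_pow]
      refine Finset.sum_congr rfl fun i _ => ?_
      rw [← pow_mul, ← hrp, ← pow_succ]
    rw [h0]
    have h1 : ∑ i ∈ Finset.range m, α ^ r ^ (i + 1) + α ^ r ^ 0
        = ∑ i ∈ Finset.range m, α ^ r ^ i + α ^ r ^ m := by
      rw [← Finset.sum_range_succ' (fun i => α ^ r ^ i) m, Finset.sum_range_succ]
    have h2 : α ^ r ^ m = α := by rw [hrm, ← hF]; exact FiniteField.pow_card α
    have h3 : α ^ r ^ 0 = α := by rw [pow_zero, pow_one]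
    rw [h2, h3] at h1
    exact add_right_cancel h1
  -- divisibility numerology
  have hq4 : 4 ≤ q := by
    rw [hq]
    calc 4 = 2 ^ 2 := rfl
    _ ≤ Q ^ s := Nat.pow_le_pow_left hQ2 2 |>.trans (Nat.pow_le_pow_right (by omega) hs)
  have hdvd1 : (Q - 1) ∣ Q ^ s - 1 := by
    have := Nat.sub_dvd_pow_sub_pow Q 1 s
    rwa [one_pow] at this
  have hdvdc : (Q - 1) ∣ Q ^ c - 1 := by
    have := Nat.sub_dvd_pow_sub_pow Q 1 c
    rwa [one_pow] at this
  have hbQdvd : b * (Q - 1) ∣ Q ^ s - 1 := by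
    rw [mul_comm]
    have h1 : (Q - 1) * b ∣ (Q - 1) * ((Q ^ s - 1) / (Q - 1)) := mul_dvd_mul_left _ hbdvd
    rwa [Nat.mul_div_cancel' hdvd1] at h1
  set Mn := (Q ^ s - 1) / (b * (Q - 1)) with hMn
  have hMmul : Mn * (b * (Q - 1)) = Q ^ s - 1 := Nat.div_mul_cancel hbQdvd
  have hq1pos : 0 < Q ^ s - 1 := by omega
  have hMpos : 0 < Mn := Nat.div_pos (Nat.le_of_dvd hq1pos hbQdvd) (Nat.mul_pos hb (by omega))
  -- Step A : ncard = Finset card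
  have hsum : ∀ x : F, ∑ i ∈ Finset.range (s / c), x ^ Q ^ (c * i) = T x := by
    intro x
    rw [hT]
    exact Finset.sum_congr rfl fun i _ => by rw [hr, ← pow_mul]
  have hsetA : {pr : F × F | pr.2 ^ Mn = ∑ i ∈ Finset.range (s / c), pr.1 ^ Q ^ (c * i)}
      = ↑(Finset.univ.filter fun pr : F × F => pr.2 ^ Mn = T pr.1) := by
    ext pr
    simp only [Set.mem_setOf_eq, Finset.coe_filter, Finset.mem_univ, true_and]
    rw [hsum pr.1]
  rw [hsetA, Set.ncard_coe_finset]
  set N := (Finset.univ.filter fun pr : F × F => pr.2 ^ Mn = T pr.1).card with hN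
  -- Step B : fiberwise over α
  set f : F → ℕ := fun t => (Finset.univ.filter fun β : F => β ^ Mn = t).card with hf
  have hB : N = ∑ α : F, f (T α) := by
    rw [hN, Finset.card_filter, ← Finset.univ_product_univ, Finset.sum_product]
    refine Finset.sum_congr rfl fun α _ => ?_
    rw [hf]
    simp only
    rw [Finset.card_filter]
  -- Step C : group by value of T
  have hC : N = ∑ t ∈ Finset.univ.image T,
      (Finset.univ.filter fun α : F => T α = t).card * f t := by
    rw [hB, Finset.sum_comp]
    simp [smul_eq_mul]
  -- Step D : fibers of T are constant
  set K := (Finset.univ.filter fun α : F => T α = 0).card with hKdef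
  have hfib : ∀ t ∈ Finset.univ.image T,
      (Finset.univ.filter fun α : F => T α = t).card = K := by
    intro t ht
    obtain ⟨α0, -, hα0⟩ := Finset.mem_image.mp ht
    rw [hKdef]
    apply Finset.card_bij (fun α _ => α - α0)
    · intro a ha
      simp only [Finset.mem_filter, Finset.mem_univ, true_and] at ha ⊢
      rw [hTsub, ha, hα0, sub_self]
    · intro a _ a' _ h
      exact sub_left_injective h
    · intro x hx
      simp only [Finset.mem_filter, Finset.mem_univ, true_and] at hx
      refine ⟨x + α0, ?_, by ring⟩
      simp only [Finset.mem_filter, Finset.mem_univ, true_and]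
      rw [hTadd, hx, hα0, zero_add]
  -- Step E : image T = set of elements fixed by x ^ r
  set Sf := (Finset.univ.filter fun x : F => x ^ r = x) with hSf
  have himsub : Finset.univ.image T ⊆ Sf := by
    intro t ht
    obtain ⟨α, -, hα⟩ := Finset.mem_image.mp ht
    rw [hSf, Finset.mem_filter]
    exact ⟨Finset.mem_univ _, by rw [← hα]; exact hTmem α⟩
  have hSfcard : Sf.card ≤ r := by
    have hsub : Sf ⊆ ((X : F[X]) ^ r - X).roots.toFinset := by
      intro x hx
      rw [hSf, Finset.mem_filter] at hx
      rw [Multiset.mem_toFinset, Polynomial.mem_roots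
        (FiniteField.X_pow_card_sub_X_ne_zero F (by omega : 1 < r))]
      simp [Polynomial.IsRoot, sub_eq_zero, hx.2]
    calc Sf.card ≤ ((X : F[X]) ^ r - X).roots.toFinset.card := Finset.card_le_card hsub
    _ ≤ Multiset.card ((X : F[X]) ^ r - X).roots := Multiset.toFinset_card_le _
    _ ≤ ((X : F[X]) ^ r - X).natDegree := Polynomial.card_roots' _
    _ = r := FiniteField.X_pow_card_sub_X_natDegree_eq F (by omega : 1 < r)
  -- kernel bound via the polynomial ∑ X ^ r ^ i
  have hK_le : K ≤ r ^ (m - 1) := by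
    set P : F[X] := ∑ i ∈ Finset.range m, (X : F[X]) ^ r ^ i with hP
    have hPne : P ≠ 0 := by
      intro h0
      have hco : P.coeff (r ^ (m - 1)) = 1 := by
        rw [hP, Polynomial.finset_sum_coeff]
        rw [Finset.sum_eq_single (m - 1)]
        · simp [Polynomial.coeff_X_pow]
        · intro i hi hne
          rw [Polynomial.coeff_X_pow, if_neg]
          intro hco
          exact hne (Nat.pow_right_injective hr2 hco.symm)
        · intro hmem
          exact absurd (Finset.mem_range.mpr (by omega)) hmem
      rw [h0] at hco
      simp at hco
    have hPdeg : P.natDegree ≤ r ^ (m - 1) := by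
      rw [hP]
      refine Polynomial.natDegree_sum_le_of_forall_le _ _ fun i hi => ?_
      rw [Polynomial.natDegree_X_pow]
      exact Nat.pow_le_pow_right (by omega) (by simp at hi; omega)
    have hsub : (Finset.univ.filter fun α : F => T α = 0) ⊆ P.roots.toFinset := by
      intro x hx
      rw [Finset.mem_filter] at hx
      rw [Multiset.mem_toFinset, Polynomial.mem_roots hPne]
      have : Polynomial.eval x P = T x := by
        rw [hP, hT, Polynomial.eval_finset_sum]
        simp
      simp [Polynomial.IsRoot, this, hx.2]
    calc K ≤ P.roots.toFinset.card := Finset.card_le_card hsub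
    _ ≤ Multiset.card P.roots := Multiset.toFinset_card_le _
    _ ≤ P.natDegree := Polynomial.card_roots' _
    _ ≤ r ^ (m - 1) := hPdeg
  have hKpos : 0 < K := by
    rw [hKdef]
    refine Finset.card_pos.mpr ⟨0, ?_⟩
    simp [hTzero]
  have hcardsum : q = (Finset.univ.image T).card * K := by
    have h1 := Finset.card_eq_sum_card_fiberwise
      (s := (Finset.univ : Finset F)) (t := Finset.univ.image T) (f := T)
      (fun (x : F) _ => Finset.mem_image_of_mem T (Finset.mem_univ x))
    rw [Finset.card_univ, hF] at h1
    rw [h1, Finset.sum_congr rfl hfib, Finset.sum_const, smul_eq_mul]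
  have hrpow : r * r ^ (m - 1) = q := by
    rw [← hrm, ← pow_succ']
    congr 1
    omega
  have him_ge : r ≤ (Finset.univ.image T).card := by
    have h1 : r * r ^ (m - 1) ≤ (Finset.univ.image T).card * r ^ (m - 1) := by
      rw [hrpow, hcardsum]
      exact Nat.mul_le_mul_left _ hK_le
    exact Nat.le_of_mul_le_mul_right h1 (Nat.pow_pos (by omega))
  have himage : Finset.univ.image T = Sf :=
    Finset.eq_of_subset_of_card_le himsub (hSfcard.trans him_ge)
  have hSfr : Sf.card = r := le_antisymm hSfcard (himage ▸ him_ge)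
  have hK : K = r ^ (m - 1) := by
    have h1 : r * K = r * r ^ (m - 1) := by
      rw [hrpow, hcardsum, himage, hSfr]
    exact Nat.eq_of_mul_eq_mul_left (by omega) h1
  -- Step F : sum over Sf
  set W := (Finset.univ.filter fun β : F => β ^ (Mn * (r - 1)) = 1).card with hWdef
  have hzeroSf : (0 : F) ∈ Sf := by
    rw [hSf, Finset.mem_filter]
    exact ⟨Finset.mem_univ _, by rw [zero_pow (by omega : r ≠ 0)]⟩
  have hf0 : f 0 = 1 := by
    rw [hf]
    simp only
    have : (Finset.univ.filter fun β : F => β ^ Mn = 0) = {0} := by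
      ext β
      simp [pow_eq_zero_iff hMpos.ne']
    rw [this, Finset.card_singleton]
  have hWpos_exp : 0 < Mn * (r - 1) := Nat.mul_pos hMpos (by omega)
  have hFsum : ∑ t ∈ Sf.erase 0, f t = W := by
    have hmaps : ∀ β ∈ (Finset.univ.filter fun β : F => β ^ (Mn * (r - 1)) = 1),
        β ^ Mn ∈ Sf.erase 0 := by
      intro β hβ
      rw [Finset.mem_filter] at hβ
      have hβ0 : β ≠ 0 := by
        rintro rfl
        rw [zero_pow hWpos_exp.ne'] at hβ
        exact zero_ne_one hβ.2
      rw [Finset.mem_erase, hSf, Finset.mem_filter]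
      refine ⟨pow_ne_zero _ hβ0, Finset.mem_univ _, ?_⟩
      rw [← pow_mul, show Mn * r = Mn * (r - 1) + Mn by
        rw [← Nat.mul_succ]; congr 1; omega]
      rw [pow_add, hβ.2, one_mul]
    have h1 := Finset.card_eq_sum_card_fiberwise hmaps
    rw [← hWdef] at h1
    rw [h1]
    refine Finset.sum_congr rfl fun t ht => ?_
    rw [hf]
    simp only
    congr 1
    ext β
    simp only [Finset.mem_filter, Finset.mem_univ, true_and]
    constructor
    case mpr => exact fun h => h.2
    intro hβt
    refine ⟨?_, hβt⟩
    rw [Finset.mem_erase, hSf, Finset.mem_filter] at ht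
    have hβ0 : β ≠ 0 := by
      rintro rfl
      rw [zero_pow hMpos.ne'] at hβt
      exact ht.1 hβt.symm
    have h2 : β ^ (Mn * r) = β ^ Mn := by
      rw [pow_mul, hβt, ht.2.2, ← hβt]
    have h3 : β ^ (Mn * (r - 1)) * β ^ Mn = 1 * β ^ Mn := by
      rw [← pow_add, one_mul, show Mn * (r - 1) + Mn = Mn * r by
        rw [← Nat.mul_succ]; congr 1; omega]
      exact h2
    exact mul_right_cancel₀ (pow_ne_zero _ hβ0) h3
  -- assemble : N = K * (1 + W)
  have hNval : N = K * (1 + W) := by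
    rw [hC, himage, Finset.sum_congr rfl (fun t ht => by rw [hfib t (himage ▸ ht)]),
      ← Finset.mul_sum]
    congr 1
    rw [← Finset.add_sum_erase _ f hzeroSf, hf0, hFsum]
  -- Step G : W as a gcd
  have hW : W = Nat.gcd (Mn * (r - 1)) (q - 1) := by
    rw [hWdef, count_pow_eq_one F _ hWpos_exp, hF]
  -- gcd computation
  set ec := (Q ^ c - 1) / (Q - 1) with hec
  have hecmul : (Q - 1) * ec = Q ^ c - 1 := Nat.mul_div_cancel' hdvdc
  have hWval : W = Mn * (Q - 1) * Nat.gcd b ec := by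
    rw [hW, hq]
    have h1 : r - 1 = (Q - 1) * ec := by rw [hecmul, hr]
    have h2 : Q ^ s - 1 = Mn * ((Q - 1) * b) := by rw [← hMmul]; ring
    rw [h1, h2, ← mul_assoc, ← mul_assoc, Nat.gcd_mul_left, Nat.gcd_comm ec b]
  -- final rational computation
  have hQ1 : (1 : ℕ) ≤ Q := by omega
  have hq1 : (1 : ℕ) ≤ q := by omega
  have hCq : (q : ℚ) = (r : ℚ) * (r : ℚ) ^ (m - 1) := by
    rw [← hrpow]; push_cast; ring
  have hCq1 : (q : ℚ) - 1 = (Mn : ℚ) * ((Q : ℚ) - 1) * (b : ℚ) := by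
    have h2 : Mn * ((Q - 1) * b) = q - 1 := by rw [hq, ← hMmul]; ring
    have h3 := congrArg (Nat.cast : ℕ → ℚ) h2
    push_cast [Nat.cast_sub hQ1, Nat.cast_sub hq1] at h3
    rw [← h3]; ring
  have hCr : ((Q : ℚ)) ^ c = (r : ℚ) := by rw [hr]; push_cast; ring
  rw [hNval, hK, hWval]
  push_cast [Nat.cast_sub hQ1]
  rw [hCr, hCq1, hCq]
  have hb0 : (b : ℚ) ≠ 0 := by positivity
  have hr0 : (r : ℚ) ≠ 0 := by
    have : (0:ℕ) < r := by omega
    positivity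
  field_simp
  ring
end

section
/- Let Q be a prime power, s ≥ 2 an integer, let b be a positive divisor of (Q^{s}−1)/(Q−1), and let c be a positive divisor of s. Then the number of elements β ∈ F_{Q^{s}} satisfying β^{(Q^{s}−1)/(b(Q−1))} ∈ F_{Q^{c}} equals gcd(b, (Q^{c}−1)/(Q−1)) · (Q^{s}−1)/b + 1. -/
lemma card_pow_eq_one_aux (F : Type*) [Field F] [Fintype F] (m : ℕ) (hm : 0 < m) :
    Set.ncard {x : F | x ^ m = 1} = Nat.gcd m (Fintype.card F - 1) := by
  classical
  set q := Fintype.card F with hq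
  set d := Nat.gcd m (q - 1) with hd
  have hq2 : 2 ≤ q := Fintype.one_lt_card
  have hq1 : 0 < q - 1 := by omega
  have hdq : d ∣ q - 1 := Nat.gcd_dvd_right _ _
  have hd0 : 0 < d := Nat.gcd_pos_of_pos_left _ hm
  have hcardu : Fintype.card Fˣ = q - 1 := by rw [Fintype.card_units, hq]
  have hsets : {x : F | x ^ m = 1} = {x : F | x ^ d = 1} := by
    ext x
    simp only [Set.mem_setOf_eq]
    constructor
    · intro h
      have hx : x ≠ 0 := by
        intro h0
        rw [h0, zero_pow hm.ne'] at h
        exact zero_ne_one h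
      set u : Fˣ := Units.mk0 x hx with hu
      have hum : u ^ m = 1 := by
        ext
        simp [hu, h]
      have hud : u ^ Nat.gcd m (Fintype.card Fˣ) = 1 :=
        pow_gcd_eq_one.mpr ⟨hum, pow_card_eq_one⟩
      rw [hcardu] at hud
      have := congrArg (Units.val) hud
      simpa [hu, hd] using this
    · intro h
      obtain ⟨k, hk⟩ := Nat.gcd_dvd_left m (q - 1)
      rw [hk, pow_mul, h, one_pow]
  rw [hsets]
  obtain ⟨g, hg⟩ := IsCyclic.exists_generator (α := Fˣ)
  have hog : orderOf g = q - 1 := by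
    rw [orderOf_eq_card_of_forall_mem_zpowers hg, Nat.card_eq_fintype_card, hcardu]
  have hoh : orderOf (g ^ ((q - 1) / d)) = d := by
    rw [orderOf_pow, hog, Nat.gcd_eq_right (Nat.div_dvd_of_dvd hdq),
      Nat.div_div_self hdq hq1.ne']
  have hoz : orderOf ((g ^ ((q - 1) / d) : Fˣ) : F) = d := by
    rw [orderOf_units, hoh]
  have hprim := IsPrimitiveRoot.orderOf ((g ^ ((q - 1) / d) : Fˣ) : F)
  rw [hoz] at hprim
  have hset2 : {x : F | x ^ d = 1} = ↑(Polynomial.nthRootsFinset d (1 : F)) := by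
    ext x
    simp [Polynomial.mem_nthRootsFinset hd0]
  rw [hset2, Set.ncard_coe_finset, hprim.card_nthRootsFinset]

/-- Let `Q` be a prime power, `s ≥ 2`, `b` a positive divisor of
`(Q^s-1)/(Q-1)`, and `c` a positive divisor of `s`. The number of `β ∈ F_{Q^s}`
with `β^((Q^s-1)/(b(Q-1))) ∈ F_{Q^c}` (membership in the subfield `F_{Q^c}` of
`F_{Q^s}` being characterized by `x^(Q^c) = x`) equals
`gcd(b, (Q^c-1)/(Q-1)) · (Q^s-1)/b + 1`. -/
theorem stmt_16 (Q : ℕ) (hQ : IsPrimePow Q) (s : ℕ) (hs : 2 ≤ s)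
    (b : ℕ) (hb : 0 < b) (hbdvd : b ∣ (Q ^ s - 1) / (Q - 1))
    (c : ℕ) (hc : 0 < c) (hcdvd : c ∣ s)
    (F : Type*) [Field F] [Fintype F] (hF : Fintype.card F = Q ^ s) :
    (Set.ncard {β : F |
        (β ^ ((Q ^ s - 1) / (b * (Q - 1)))) ^ (Q ^ c) =
          β ^ ((Q ^ s - 1) / (b * (Q - 1)))} : ℚ) =
      (Nat.gcd b ((Q ^ c - 1) / (Q - 1)) : ℚ) * (((Q : ℚ) ^ s - 1) / (b : ℚ)) + 1 := by
  have hQ2 : 2 ≤ Q := hQ.two_le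
  have hD : 0 < Q - 1 := by omega
  have hQs : 2 ≤ Q ^ s := by
    calc 2 ≤ Q := hQ2
    _ = Q ^ 1 := (pow_one Q).symm
    _ ≤ Q ^ s := Nat.pow_le_pow_right (by omega) (by omega)
  have hQc : 2 ≤ Q ^ c := by
    calc 2 ≤ Q := hQ2
    _ = Q ^ 1 := (pow_one Q).symm
    _ ≤ Q ^ c := Nat.pow_le_pow_right (by omega) hc
  -- divisibility of Q-1
  have hDs : Q - 1 ∣ Q ^ s - 1 := by
    have := Nat.sub_dvd_pow_sub_pow Q 1 s
    simpa using this
  have hDc : Q - 1 ∣ Q ^ c - 1 := by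
    have := Nat.sub_dvd_pow_sub_pow Q 1 c
    simpa using this
  obtain ⟨T, hT⟩ := hDs
  obtain ⟨Tc, hTc⟩ := hDc
  have hTdiv : (Q ^ s - 1) / (Q - 1) = T := by
    rw [hT, Nat.mul_div_cancel_left _ hD]
  have hTcdiv : (Q ^ c - 1) / (Q - 1) = Tc := by
    rw [hTc, Nat.mul_div_cancel_left _ hD]
  rw [hTdiv] at hbdvd
  obtain ⟨E, hE⟩ := hbdvd
  have hQs1 : Q ^ s - 1 = (b * (Q - 1)) * E := by rw [hT, hE]; ring
  have hE0 : 0 < E := by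
    rcases Nat.eq_zero_or_pos E with h | h
    · rw [h, mul_zero] at hQs1; omega
    · exact h
  have he : (Q ^ s - 1) / (b * (Q - 1)) = E := by
    rw [hQs1, Nat.mul_div_cancel_left _ (by positivity)]
  rw [he]
  -- the counting
  have hm0 : 0 < E * (Q ^ c - 1) := by
    have : 0 < Q ^ c - 1 := by omega
    positivity
  obtain ⟨k, hk⟩ : ∃ k, Q ^ c = k + 1 := ⟨Q ^ c - 1, by omega⟩
  have hset : {β : F | (β ^ E) ^ (Q ^ c) = β ^ E}
      = insert (0 : F) {x : F | x ^ (E * (Q ^ c - 1)) = 1} := by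
    ext β
    simp only [Set.mem_setOf_eq, Set.mem_insert_iff]
    constructor
    · intro hβ
      rcases eq_or_ne β 0 with h0 | h0
      · exact Or.inl h0
      · right
        have hne : β ^ E ≠ 0 := pow_ne_zero _ h0
        rw [hk, pow_succ] at hβ
        have hβ' : (β ^ E) ^ k * β ^ E = 1 * β ^ E := by rw [one_mul]; exact hβ
        have h1 : (β ^ E) ^ k = 1 := mul_right_cancel₀ hne hβ'
        have hk1 : Q ^ c - 1 = k := by omega
        rw [hk1, pow_mul]
        exact h1
    · rintro (h0 | h1)
      · rw [h0, zero_pow hE0.ne', zero_pow (by positivity : (Q:ℕ) ^ c ≠ 0)]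
      · rw [hk, pow_succ, ← pow_mul]
        have hk1 : Q ^ c - 1 = k := by omega
        rw [hk1] at h1
        rw [mul_comm E k] at h1 ⊢
        rw [pow_mul] at h1 ⊢
        rw [h1, one_mul]
  have h0nm : (0 : F) ∉ {x : F | x ^ (E * (Q ^ c - 1)) = 1} := by
    simp [zero_pow hm0.ne']
  have hcount : Set.ncard {β : F | (β ^ E) ^ (Q ^ c) = β ^ E}
      = Nat.gcd (E * (Q ^ c - 1)) (Q ^ s - 1) + 1 := by
    rw [hset, Set.ncard_insert_of_notMem h0nm (Set.toFinite _),
      card_pow_eq_one_aux F _ hm0, hF]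
  rw [hcount]
  -- arithmetic: gcd (E*(Q^c-1)) (Q^s-1) = gcd b Tc * ((Q-1)*E)
  have hgcd : Nat.gcd (E * (Q ^ c - 1)) (Q ^ s - 1) = (E * (Q - 1)) * Nat.gcd Tc b := by
    have h1 : E * (Q ^ c - 1) = (E * (Q - 1)) * Tc := by rw [hTc]; ring
    have h2 : Q ^ s - 1 = (E * (Q - 1)) * b := by rw [hQs1]; ring
    rw [h1, h2, Nat.gcd_mul_left]
  rw [hgcd, hTcdiv]
  have hbQ : ((Q : ℚ) ^ s - 1) = ((b : ℚ) * ((Q : ℚ) - 1)) * (E : ℚ) := by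
    have h := congrArg (Nat.cast : ℕ → ℚ) hQs1
    push_cast [Nat.cast_sub (show 1 ≤ Q ^ s by omega),
      Nat.cast_sub (show 1 ≤ Q by omega)] at h
    linarith
  have hb0 : (b : ℚ) ≠ 0 := by positivity
  rw [Nat.gcd_comm Tc b]
  push_cast [Nat.cast_sub (show 1 ≤ Q by omega)]
  rw [hbQ]
  field_simp
end

section
/- Let s be an even positive integer, q = 2^{2s}, and let η ∈ F_q be an element not of the form α² + α for any α ∈ F_q. Then the number of pairs (x, y) ∈ F_q × F_q satisfying y³ = x² + x + η equals q + 2^{s+1}; that is, the curve y³ = x² + x + η is a maximal curve of genus 1 over F_q, attaining the Hasse–Weil upper bound q + 1 + 2√q (the curve has exactly one rational point at infinity). -/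
open Finset

/-- Let `s` be an even positive integer, `q = 2^(2s)`, and
`η ∈ F_q` not of the form `α² + α`. Then
`|{(x, y) ∈ F_q × F_q : y³ = x² + x + η}| = q + 2^(s+1)`, i.e. the curve
`y³ = x² + x + η` is a maximal genus-1 curve over `F_q`. -/
theorem stmt_19 (s : ℕ) (hs : 0 < s) (hse : Even s)
    (q : ℕ) (hq : q = 2 ^ (2 * s))
    (F : Type*) [Field F] [Fintype F] (hF : Fintype.card F = q)
    (η : F) (hη : ∀ α : F, η ≠ α ^ 2 + α) :
    Set.ncard {p : F × F | p.2 ^ 3 = p.1 ^ 2 + p.1 + η} = q + 2 ^ (s + 1) := by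
  classical
  subst hq
  -- characteristic 2
  have hrc : ringChar F = 2 := by
    haveI := ringChar.charP F
    obtain ⟨n, hprime, hcards⟩ := FiniteField.card F (ringChar F)
    have hdvd : ringChar F ∣ 2 ^ (2 * s) := by
      rw [← hF, hcards]
      exact dvd_pow_self _ n.ne_zero
    have := hprime.dvd_of_dvd_pow hdvd
    exact (Nat.prime_dvd_prime_iff_eq hprime Nat.prime_two).mp this
  haveI hchar : CharP F 2 := hrc ▸ ringChar.charP F
  have h2 : (2:F) = 0 := CharTwo.two_eq_zero
  have hadd0 : ∀ a b : F, a + b = 0 → a = b := by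
    intro a b h
    rw [eq_neg_of_add_eq_zero_left h, CharTwo.neg_eq]
  have hself : ∀ a : F, a + a = 0 := CharTwo.add_self_eq_zero
  -- a primitive cube root of unity
  have h3dvd : 3 ∣ Fintype.card Fˣ := by
    rw [Fintype.card_units, hF]
    have h4 : (2:ℕ)^(2*s) = 4^s := by rw [pow_mul]; norm_num
    rw [h4]
    simpa using Nat.sub_dvd_pow_sub_pow 4 1 s
  obtain ⟨u, hu⟩ := exists_prime_orderOf_dvd_card 3 h3dvd
  set ω : F := (u : F) with hωdef
  have hω3 : ω ^ 3 = 1 := by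
    have h : u ^ 3 = 1 := by rw [← hu]; exact pow_orderOf_eq_one u
    have := congrArg (Units.val) h
    simpa [hωdef] using this
  have hω1 : ω ≠ 1 := by
    intro h
    have : u = 1 := Units.ext h
    rw [this] at hu
    simp at hu
  have hω2 : ω^2 + ω + 1 = 0 := by
    have hfac : (ω + 1) * (ω^2 + ω + 1) = 0 := by
      linear_combination hω3 + (ω^2+ω+1)*h2
    rcases mul_eq_zero.mp hfac with h | h
    · exact absurd (hadd0 _ _ h) hω1
    · exact h
  have hωne0 : ω ≠ 0 := by
    intro h; rw [h] at hω3; simp at hω3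
  have hω21 : ω^2 ≠ 1 := by
    intro h
    have h3 := hω3
    rw [pow_succ, h, one_mul] at h3
    exact hω1 h3
  have hω2ω : ω^2 ≠ ω := by
    intro h
    apply hω1
    have : ω * ω = ω * 1 := by rw [mul_one, ← sq, h]
    exact mul_left_cancel₀ hωne0 this
  have hω20 : ω^2 ≠ 0 := pow_ne_zero _ hωne0
  -- the Artin-Schreier subgroup H
  set φ : F →+ F := AddMonoidHom.mk' (fun a => a^2 + a)
    (fun a b => by linear_combination (a*b)*h2) with hφdef
  set H : AddSubgroup F := φ.range with hHdef
  have hmemH : ∀ x : F, x ∈ H ↔ ∃ α : F, α^2 + α = x := by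
    intro x
    constructor
    · rintro ⟨α, hα⟩; exact ⟨α, hα⟩
    · rintro ⟨α, hα⟩; exact ⟨α, hα⟩
  have hηH : η ∉ H := by
    rw [hmemH]; rintro ⟨α, hα⟩; exact hη α hα.symm
  have hsqmem : ∀ x : F, x^2 + x ∈ H := fun x => (hmemH _).mpr ⟨x, rfl⟩
  have h1H : (1:F) ∈ H := (hmemH 1).mpr ⟨ω, by linear_combination hω2 - h2⟩
  -- H has index 2
  have hker : ∀ x : F, x ∈ φ.ker ↔ (x = 0 ∨ x = 1) := by
    intro x
    rw [AddMonoidHom.mem_ker]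
    constructor
    · intro hx
      have hx' : x^2 + x = 0 := hx
      have : x * (x + 1) = 0 := by linear_combination hx'
      rcases mul_eq_zero.mp this with h | h
      · exact Or.inl h
      · exact Or.inr (hadd0 _ _ h)
    · rintro (rfl | rfl)
      · show (0:F)^2 + 0 = 0; norm_num
      · show (1:F)^2 + 1 = 0; linear_combination h2
  have hkerset : (φ.ker : Set F) = {0, 1} := by
    ext x; simpa using hker x
  have hcardker : Nat.card φ.ker = 2 := by
    rw [← SetLike.coe_sort_coe, Nat.card_coe_set_eq, hkerset,
      Set.ncard_pair (zero_ne_one (α := F))]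
  have hcardH2 : Nat.card H * 2 = Fintype.card F := by
    have h1 := AddSubgroup.card_eq_card_quotient_mul_card_addSubgroup φ.ker
    have h2' : Nat.card (F ⧸ φ.ker) = Nat.card H :=
      Nat.card_congr (QuotientAddGroup.quotientKerEquivRange φ).toEquiv
    rw [Nat.card_eq_fintype_card, h2', hcardker] at h1
    exact h1.symm
  have hindex : H.index = 2 := by
    have hmi := AddSubgroup.card_mul_index H
    rw [Nat.card_eq_fintype_card (α := F), ← hcardH2] at hmi
    have hpos : 0 < Nat.card H := Nat.card_pos
    exact Nat.eq_of_mul_eq_mul_left hpos hmi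
  obtain ⟨aa, haa⟩ := AddSubgroup.index_eq_two_iff.mp hindex
  have hHcompl : ∀ x y : F, x ∉ H → y ∉ H → x + y ∈ H := by
    intro x y hx hy
    have hx' : x + aa ∈ H := by
      rcases haa x with ⟨h1, _⟩ | ⟨h1, _⟩
      · exact h1
      · exact absurd h1 hx
    have hy' : y + aa ∈ H := by
      rcases haa y with ⟨h1, _⟩ | ⟨h1, _⟩
      · exact h1
      · exact absurd h1 hy
    have hmem := H.add_mem hx' hy'
    have heq : (x + aa) + (y + aa) = x + y := by linear_combination aa*h2
    rwa [heq] at hmem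
  -- the quadratic-ish character ψ
  set ψ : F → ℤ := fun x => if x ∈ H then 1 else -1 with hψdef
  have ψmem : ∀ x, x ∈ H → ψ x = 1 := fun x hx => if_pos hx
  have ψnmem : ∀ x, x ∉ H → ψ x = -1 := fun x hx => if_neg hx
  have ψhom : ∀ x y : F, ψ (x + y) = ψ x * ψ y := by
    intro x y
    by_cases hx : x ∈ H <;> by_cases hy : y ∈ H
    · rw [ψmem _ hx, ψmem _ hy, ψmem _ (H.add_mem hx hy)]; ring
    · have hxy : x + y ∉ H := by
        intro h
        apply hy
        have heq : (x + y) + x = y := by linear_combination x*h2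
        exact heq ▸ H.add_mem h hx
      rw [ψmem _ hx, ψnmem _ hy, ψnmem _ hxy]; ring
    · have hxy : x + y ∉ H := by
        intro h
        apply hx
        have heq : (x + y) + y = x := by linear_combination y*h2
        exact heq ▸ H.add_mem h hy
      rw [ψnmem _ hx, ψmem _ hy, ψnmem _ hxy]; ring
    · rw [ψnmem _ hx, ψnmem _ hy, ψmem _ (hHcompl x y hx hy)]; ring
  have ψ0 : ψ 0 = 1 := ψmem _ H.zero_mem
  have ψ1 : ψ 1 = 1 := ψmem _ h1H
  have ψη : ψ η = -1 := ψnmem _ hηH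
  have ψsq : ∀ x : F, ψ (x^2) = ψ x := by
    intro x
    have heq : x^2 = (x^2 + x) + x := by linear_combination (-x)*h2
    rw [heq, ψhom, ψmem _ (hsqmem x), one_mul]
  have ψsum : ∑ z : F, ψ z = 0 := by
    have h1 : ∑ z : F, ψ (z + η) = ∑ z : F, ψ z :=
      Equiv.sum_comp (Equiv.addRight η) ψ
    have h2' : ∑ z : F, ψ (z + η) = -∑ z : F, ψ z := by
      calc ∑ z : F, ψ (z + η) = ∑ z : F, -ψ z := by
            refine sum_congr rfl fun z _ => ?_
            rw [ψhom, ψη]; ring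
        _ = -∑ z : F, ψ z := by rw [Finset.sum_neg_distrib]
    omega
  have ψlin : ∀ a : F, a ≠ 0 → ∑ u : F, ψ (a * u) = 0 := by
    intro a ha
    have := Equiv.sum_comp (Equiv.mulLeft₀ a ha) ψ
    simp only [Equiv.mulLeft₀_apply] at this
    calc ∑ u : F, ψ (a * u) = ∑ u : F, ψ u := this
      _ = 0 := ψsum
  have ψone_sum : ∑ u : F, ψ (u^2 + u) = (2:ℤ)^(2*s) := by
    rw [sum_congr rfl (fun u _ => ψmem _ (hsqmem u)), Finset.sum_const, card_univ, hF]
    push_cast; ring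
  have ψquad : ∀ c : F, c ≠ 0 → c ≠ 1 → ∑ u : F, ψ (c * u^2 + c * u) = 0 := by
    intro c hc0 hc1
    obtain ⟨b, hb⟩ := FiniteField.isSquare_of_char_two hrc c
    have hbc : b + c ≠ 0 := by
      intro h
      have hb' : b = c := hadd0 _ _ h
      rw [hb'] at hb
      have : c * (c - 1) = 0 := by linear_combination -hb
      rcases mul_eq_zero.mp this with h' | h'
      · exact hc0 h'
      · exact hc1 (sub_eq_zero.mp h')
    have key : ∀ u : F, ψ (c * u^2 + c * u) = ψ ((b + c) * u) := by
      intro u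
      have e1 : c * u^2 + c * u = (b*u)^2 + c*u := by linear_combination u^2 * hb
      rw [e1, ψhom, ψsq, ← ψhom]
      congr 1; ring
    rw [sum_congr rfl fun u _ => key u]
    exact ψlin _ hbc
  -- cube roots of unity
  have hcube : ∀ d : F, d^3 = 1 → d = 1 ∨ d = ω ∨ d = ω^2 := by
    intro d hd
    have hfac : (d + 1) * ((d + ω) * (d + ω^2)) = 0 := by
      linear_combination hd + d^2 * hω2 + d*hω2 + d*hω3 + hω3 + h2
    rcases mul_eq_zero.mp hfac with h | h
    · exact Or.inl (hadd0 _ _ h)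
    rcases mul_eq_zero.mp h with h' | h'
    · exact Or.inr (Or.inl (hadd0 _ _ h'))
    · exact Or.inr (Or.inr (hadd0 _ _ h'))
  have hω23 : (ω^2)^3 = 1 := by
    calc (ω^2)^3 = (ω^3)^2 := by ring
      _ = 1 := by rw [hω3]; ring
  -- the key sum T
  set T : ℤ := ∑ y : F, ψ (y^3) with hT
  -- inner sums
  have hinner : ∀ d : F, (∑ y : F, ψ (y^3 + (y+d)^3))
      = if d = 0 ∨ d^3 = 1 then (2:ℤ)^(2*s) else 0 := by
    intro d
    by_cases hd0 : d = 0
    · subst hd0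
      rw [if_pos (Or.inl rfl)]
      calc ∑ y : F, ψ (y^3+(y+0)^3) = ∑ _y : F, (1:ℤ) := by
            refine sum_congr rfl fun y _ => ?_
            rw [add_zero, hself (y^3), ψ0]
        _ = (2:ℤ)^(2*s) := by
            rw [Finset.sum_const, card_univ, hF]; push_cast; ring
    · have hstep : ∑ y : F, ψ (y^3+(y+d)^3) = ∑ u : F, ψ ((d^3*u^2 + d^3*u) + d^3) := by
        rw [← Equiv.sum_comp (Equiv.mulLeft₀ d hd0) (fun y => ψ (y^3 + (y+d)^3))]
        refine sum_congr rfl fun u _ => ?_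
        simp only [Equiv.mulLeft₀_apply]
        congr 1
        linear_combination (d^3*(u^3+u^2+u)) * h2
      rw [hstep]
      have hsplit : ∑ u : F, ψ ((d^3*u^2+d^3*u) + d^3)
          = (∑ u : F, ψ (d^3*u^2 + d^3*u)) * ψ (d^3) := by
        rw [Finset.sum_mul]
        exact sum_congr rfl fun u _ => ψhom _ _
      rw [hsplit]
      by_cases hd1 : d^3 = 1
      · rw [if_pos (Or.inr hd1), hd1, ψ1, mul_one]
        calc ∑ u : F, ψ (1*u^2 + 1*u) = ∑ u : F, ψ (u^2 + u) := by
              refine sum_congr rfl fun u _ => ?_; rw [one_mul, one_mul]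
          _ = (2:ℤ)^(2*s) := ψone_sum
      · rw [if_neg (by push_neg; exact ⟨hd0, hd1⟩),
          ψquad _ (pow_ne_zero 3 hd0) hd1, zero_mul]
  -- T² = 4q
  have hTsq : T^2 = 4 * 2^(2*s) := by
    have e1 : T^2 = ∑ y : F, ∑ z : F, ψ (y^3 + z^3) := by
      rw [sq, hT, Fintype.sum_mul_sum]
      exact sum_congr rfl fun y _ => sum_congr rfl fun z _ => (ψhom _ _).symm
    have e2 : ∀ y : F, ∑ z : F, ψ (y^3 + z^3) = ∑ d : F, ψ (y^3 + (y+d)^3) :=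
      fun y => (Equiv.sum_comp (Equiv.addLeft y) (fun z => ψ (y^3 + z^3))).symm
    rw [e1, sum_congr rfl fun y _ => e2 y, Finset.sum_comm,
      sum_congr rfl fun d _ => hinner d, ← Finset.sum_filter]
    have hfe : univ.filter (fun d : F => d = 0 ∨ d^3 = 1) = {0, 1, ω, ω^2} := by
      ext d
      simp only [mem_filter, mem_univ, true_and, mem_insert, mem_singleton]
      constructor
      · rintro (rfl | hd)
        · exact Or.inl rfl
        · rcases hcube d hd with rfl | rfl | rfl
          · exact Or.inr (Or.inl rfl)
          · exact Or.inr (Or.inr (Or.inl rfl))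
          · exact Or.inr (Or.inr (Or.inr rfl))
      · rintro (rfl | rfl | rfl | rfl)
        · exact Or.inl rfl
        · exact Or.inr (one_pow 3)
        · exact Or.inr hω3
        · exact Or.inr hω23
    rw [hfe]
    have hcard4 : ({0, 1, ω, ω^2} : Finset F).card = 4 := by
      rw [card_insert_of_notMem, card_insert_of_notMem, card_insert_of_notMem,
        card_singleton]
      · simp only [mem_singleton]; exact hω2ω.symm
      · simp only [mem_insert, mem_singleton]
        push_neg
        exact ⟨fun h => hω1 h.symm, fun h => hω21 h.symm⟩
      · simp only [mem_insert, mem_singleton]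
        push_neg
        exact ⟨fun h => one_ne_zero h.symm, fun h => hωne0 h.symm, fun h => hω20 h.symm⟩
    rw [Finset.sum_const, hcard4]
    push_cast; ring
  -- T ≡ 1 mod 3
  have hTmod : (3:ℤ) ∣ T - 1 := by
    have e0 : ψ ((0:F)^3) + ∑ y ∈ univ.erase (0:F), ψ (y^3) = T :=
      Finset.add_sum_erase univ (fun y : F => ψ (y^3)) (mem_univ (0:F))
    have hψ03 : ψ ((0:F)^3) = 1 := by
      rw [show ((0:F)^3) = 0 by norm_num, ψ0]
    have e1 : ∑ y ∈ univ.erase (0:F), ψ (y^3)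
        = ∑ v ∈ (univ.erase (0:F)).image (fun y : F => y^3),
            ((univ.erase (0:F)).filter fun y => y^3 = v).card • ψ v :=
      Finset.sum_comp ψ (fun y : F => y^3)
    have hfib : ∀ v ∈ (univ.erase (0:F)).image (fun y : F => y^3),
        ((univ.erase (0:F)).filter fun y => y^3 = v).card = 3 := by
      intro v hv
      obtain ⟨y₀, hy₀mem, hy₀⟩ := mem_image.mp hv
      have hy₀0 : y₀ ≠ 0 := (mem_erase.mp hy₀mem).1
      have hset : ((univ.erase (0:F)).filter fun y => y^3 = v) = {y₀, ω*y₀, ω^2*y₀} := by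
        ext y
        simp only [mem_filter, mem_erase, mem_univ, and_true, mem_insert, mem_singleton]
        constructor
        · rintro ⟨hy0, hyv⟩
          have h3 : y^3 = y₀^3 := hyv.trans hy₀.symm
          have hfac : (y + y₀) * ((y + ω*y₀) * (y + ω^2*y₀)) = 0 := by
            linear_combination h3 + y^2*y₀*hω2 + y*y₀^2*hω2 + y*y₀^2*hω3 + y₀^3*hω3 + y₀^3*h2
          rcases mul_eq_zero.mp hfac with h | h
          · exact Or.inl (hadd0 _ _ h)
          rcases mul_eq_zero.mp h with h' | h'
          · exact Or.inr (Or.inl (hadd0 _ _ h'))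
          · exact Or.inr (Or.inr (hadd0 _ _ h'))
        · rintro (rfl | rfl | rfl)
          · exact ⟨hy₀0, hy₀⟩
          · exact ⟨mul_ne_zero hωne0 hy₀0, by rw [mul_pow, hω3, one_mul, hy₀]⟩
          · exact ⟨mul_ne_zero hω20 hy₀0, by rw [mul_pow, hω23, one_mul, hy₀]⟩
      have hne1 : y₀ ≠ ω * y₀ := by
        intro h
        have h' : (1 - ω) * y₀ = 0 := by linear_combination h
        rcases mul_eq_zero.mp h' with h'' | h''
        · exact hω1 (sub_eq_zero.mp h'').symm
        · exact hy₀0 h''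
      have hne2 : y₀ ≠ ω^2 * y₀ := by
        intro h
        have h' : (1 - ω^2) * y₀ = 0 := by linear_combination h
        rcases mul_eq_zero.mp h' with h'' | h''
        · exact hω21 (sub_eq_zero.mp h'').symm
        · exact hy₀0 h''
      have hne3 : ω * y₀ ≠ ω^2 * y₀ := by
        intro h
        have h' : (ω - ω^2) * y₀ = 0 := by linear_combination h
        rcases mul_eq_zero.mp h' with h'' | h''
        · exact hω2ω (sub_eq_zero.mp h'').symm
        · exact hy₀0 h''
      rw [hset,
        card_insert_of_notMem (by
          simp only [mem_insert, mem_singleton]; push_neg; exact ⟨hne1, hne2⟩),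
        card_insert_of_notMem (by simp only [mem_singleton]; exact hne3),
        card_singleton]
    have e2 : ∑ v ∈ (univ.erase (0:F)).image (fun y : F => y^3),
        ((univ.erase (0:F)).filter fun y => y^3 = v).card • ψ v
        = 3 * ∑ v ∈ (univ.erase (0:F)).image (fun y : F => y^3), ψ v := by
      rw [Finset.mul_sum]
      refine sum_congr rfl fun v hv => ?_
      rw [hfib v hv]
      push_cast; ring
    have : T - 1 = 3 * ∑ v ∈ (univ.erase (0:F)).image (fun y : F => y^3), ψ v := by
      rw [← e0, hψ03, e1, e2]; ring
    exact ⟨_, this⟩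
  -- the sign of T
  obtain ⟨t, ht⟩ := hse
  have hT4 : T = -(2^(s+1)) := by
    have hA : ((2:ℤ)^(s+1))^2 = 4*2^(2*s) := by
      rw [← pow_mul, show (s+1)*2 = 2*s+2 by ring, pow_add]
      ring
    have hfac : (T - 2^(s+1)) * (T + 2^(s+1)) = 0 := by
      linear_combination hTsq - hA
    rcases mul_eq_zero.mp hfac with h | h
    · exfalso
      have hTe : T = 2^(s+1) := by
        have := sub_eq_zero.mp h; linarith
      have h4t : (3:ℤ) ∣ 4^t - 1 := by
        simpa using sub_dvd_pow_sub_pow (4:ℤ) 1 t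
      have h2s : (2:ℤ)^(s+1) = 2 * 4^t := by
        rw [ht, show t+t+1 = 2*t+1 by ring, pow_succ, pow_mul]
        norm_num; ring
      rw [hTe, h2s] at hTmod
      omega
    · have := sub_eq_zero.mp (by linear_combination h : T - (-(2^(s+1))) = 0)
      exact this
  -- fiber counts in x
  have hxcard : ∀ v : F, ((univ.filter fun x : F => x^2 + x = v)).card
      = if v ∈ H then 2 else 0 := by
    intro v
    by_cases hv : v ∈ H
    · rw [if_pos hv]
      obtain ⟨α, hα⟩ := (hmemH v).mp hv
      have hset : (univ.filter fun x : F => x^2+x = v) = {α, α+1} := by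
        ext x
        simp only [mem_filter, mem_univ, true_and, mem_insert, mem_singleton]
        constructor
        · intro hx
          have hfac : (x + α) * (x + α + 1) = 0 := by
            linear_combination hx - hα + (α^2+α+x*α)*h2
          rcases mul_eq_zero.mp hfac with h | h
          · exact Or.inl (hadd0 _ _ h)
          · right
            have h' : x + (α + 1) = 0 := by linear_combination h
            exact hadd0 _ _ h'
        · rintro (rfl | rfl)
          · exact hα
          · linear_combination hα + (α+1)*h2
      rw [hset, card_insert_of_notMem, card_singleton]
      simp only [mem_singleton]
      intro h
      have h1 : (1:F) = 0 := by linear_combination -h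
      exact one_ne_zero h1
    · rw [if_neg hv, Finset.card_eq_zero, Finset.filter_eq_empty_iff]
      exact fun x _ hx => hv ((hmemH v).mpr ⟨x, hx⟩)
  -- the main count
  set S : Finset (F × F) := univ.filter (fun p : F × F => p.2^3 = p.1^2 + p.1 + η) with hS
  have hsetS : {p : F × F | p.2 ^ 3 = p.1 ^ 2 + p.1 + η} = ↑S := by
    ext p; simp [hS]
  rw [hsetS, Set.ncard_coe_finset]
  have hfibs : S.card = ∑ y : F, ((univ.filter fun x : F => x^2 + x = y^3 + η)).card := by
    rw [Finset.card_eq_sum_card_fiberwise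
      (f := fun p : F × F => p.2) (t := univ) (fun p _ => mem_univ _)]
    refine sum_congr rfl fun y _ => ?_
    have himg : (S.filter fun p => p.2 = y)
        = (univ.filter fun x : F => x^2+x = y^3+η).image (fun x => (x, y)) := by
      ext p
      obtain ⟨p1, p2⟩ := p
      simp only [hS, mem_filter, mem_univ, true_and, mem_image, filter_filter]
      constructor
      · rintro ⟨hp, rfl⟩
        exact ⟨p1, by linear_combination -hp - η*h2, rfl⟩
      · rintro ⟨x, hx, hxy⟩
        obtain ⟨rfl, rfl⟩ := Prod.mk.injEq .. ▸ hxy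
        exact ⟨by linear_combination -hx - η*h2, rfl⟩
    rw [himg, card_image_of_injective _ (fun a b hab => congrArg Prod.fst hab)]
  have hfibs2 : S.card = ∑ y : F, (if y^3 + η ∈ H then 2 else 0) := by
    rw [hfibs]
    exact sum_congr rfl fun y _ => hxcard _
  have hScard : S.card = 2 * (univ.filter fun y : F => y^3 + η ∈ H).card := by
    rw [hfibs2, ← Finset.sum_filter, Finset.sum_const, smul_eq_mul, mul_comm]
  -- relate T and B
  have hstep : ∀ y : F, ψ (y^3) = -ψ (y^3 + η) := by
    intro y
    have e : y^3 + η + η = y^3 := by linear_combination η * h2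
    calc ψ (y^3) = ψ ((y^3 + η) + η) := by rw [e]
      _ = -ψ (y^3 + η) := by rw [ψhom, ψη]; ring
  have hcardsplit := Finset.card_filter_add_card_filter_not
      (s := (univ : Finset F)) (p := fun y : F => y^3 + η ∈ H)
  rw [card_univ] at hcardsplit
  have hsplit : ∑ y : F, ψ (y^3 + η)
      = ((univ.filter fun y : F => y^3 + η ∈ H).card : ℤ)
        - ((univ.filter fun y : F => ¬ (y^3 + η ∈ H)).card : ℤ) := by
    rw [← Finset.sum_filter_add_sum_filter_not univ (fun y : F => y^3 + η ∈ H),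
      sum_congr rfl (fun y hy => ψmem _ (mem_filter.mp hy).2),
      sum_congr rfl (fun y hy => ψnmem _ (mem_filter.mp hy).2),
      Finset.sum_const, Finset.sum_const]
    push_cast
    ring
  have hTB : T = (Fintype.card F : ℤ)
      - 2 * ((univ.filter fun y : F => y^3 + η ∈ H).card : ℤ) := by
    rw [hT, sum_congr rfl fun y _ => hstep y, Finset.sum_neg_distrib, hsplit]
    have h' : (((univ.filter fun y : F => y^3 + η ∈ H).card) : ℤ)
        + (((univ.filter fun y : F => ¬ (y^3 + η ∈ H)).card) : ℤ)
        = (Fintype.card F : ℤ) := by exact_mod_cast hcardsplit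
    linarith
  -- finish
  have hBF : (2:ℤ) * ((univ.filter fun y : F => y^3 + η ∈ H).card : ℤ)
      = 2^(2*s) + 2^(s+1) := by
    rw [hF] at hTB
    rw [hT4] at hTB
    push_cast at hTB ⊢
    linarith
  have hfin : (S.card : ℤ) = ((2^(2*s) + 2^(s+1) : ℕ) : ℤ) := by
    rw [hScard]
    push_cast
    linarith [hBF]
  exact_mod_cast hfin
end
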